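/- Let n ≥ 2, K > 0, and 0 < ρ < min{(32nK)^{−1}, α, β, R_*}. Let h : B_ρ(0') → ℝ satisfy h(0') = 0, |h(x')| ≤ nK|x'|² and |∇'h(x')| ≤ nKρ < 1/32 on B_ρ(0'). Let x ∈ B_{ρ/4}((0', ρ/2)). Then for every unit vector e_v ∈ S^{n−1}, the ray {x + ℓ e_v : ℓ > 0} intersects the graph {(z', h(z')) : |z'| < ρ} in at most one point. -/

import Mathlib

open Metric Set

set_option maxHeartbeats 1000000

noncomputable section

theorem stmt_8 (n : ℕ) (hn : 2 ≤ n) (K α β Rst ρ : ℝ)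
    (hK : 0 < K) (hα : 0 < α) (hβ : 0 < β) (hRst : 0 < Rst)
    (hρ : 0 < ρ) (hρ1 : ρ < (32 * n * K)⁻¹) (hρ2 : ρ < α) (hρ3 : ρ < β) (hρ4 : ρ < Rst)
    (h : EuclideanSpace ℝ (Fin (n - 1)) → ℝ)
    (h0 : h 0 = 0)
    (hhb : ∀ x' ∈ ball (0 : EuclideanSpace ℝ (Fin (n - 1))) ρ, |h x'| ≤ n * K * ‖x'‖ ^ 2)
    (hdiff : DifferentiableOn ℝ h (ball 0 ρ))
    (hgrad : ∀ x' ∈ ball (0 : EuclideanSpace ℝ (Fin (n - 1))) ρ,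
      ‖fderivWithin ℝ h (ball 0 ρ) x'‖ ≤ n * K * ρ)
    -- the point `x = (x', xₙ)` lies in the Euclidean ball `B_{ρ/4}((0', ρ/2))`
    (x' : EuclideanSpace ℝ (Fin (n - 1))) (xn : ℝ)
    (hx : ‖x'‖ ^ 2 + (xn - ρ / 2) ^ 2 < (ρ / 4) ^ 2)
    -- `e_v = (v', vₙ)` is a unit vector
    (v' : EuclideanSpace ℝ (Fin (n - 1))) (vn : ℝ) (hv : ‖v'‖ ^ 2 + vn ^ 2 = 1) :
    -- the ray `x + ℓ e_v`, `ℓ > 0`, meets the graph `{(z', h z') : ‖z'‖ < ρ}` at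
    -- most once
    ∀ ℓ₁ ℓ₂ : ℝ, 0 < ℓ₁ → 0 < ℓ₂ →
      ‖x' + ℓ₁ • v'‖ < ρ → xn + ℓ₁ * vn = h (x' + ℓ₁ • v') →
      ‖x' + ℓ₂ • v'‖ < ρ → xn + ℓ₂ * vn = h (x' + ℓ₂ • v') →
      ℓ₁ = ℓ₂ := by
  have hn' : (2 : ℝ) ≤ (n : ℝ) := by exact_mod_cast hn
  have hpos : (0 : ℝ) < 32 * n * K := by nlinarith
  have hnKρ : (n : ℝ) * K * ρ < 1 / 32 := by
    have h1 : ρ * (32 * n * K) < (32 * n * K)⁻¹ * (32 * n * K) :=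
      mul_lt_mul_of_pos_right hρ1 hpos
    rw [inv_mul_cancel₀ (ne_of_gt hpos)] at h1
    nlinarith
  have hnK : (0 : ℝ) < (n : ℝ) * K := by nlinarith
  have hx'n : ‖x'‖ < ρ / 4 := by
    nlinarith [norm_nonneg x', sq_nonneg (xn - ρ / 2)]
  have hxn1 : ρ / 4 < xn := by nlinarith [sq_nonneg ‖x'‖]
  have hxn2 : xn < 3 * ρ / 4 := by nlinarith [sq_nonneg ‖x'‖]
  have hv'1 : ‖v'‖ ≤ 1 := by nlinarith [norm_nonneg v', sq_nonneg vn]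
  -- key facts about any intersection parameter
  have key : ∀ ℓ : ℝ, 0 < ℓ → ‖x' + ℓ • v'‖ < ρ → xn + ℓ * vn = h (x' + ℓ • v') →
      ℓ < 2 * ρ ∧ ℓ * vn < -(7 * ρ / 32) := by
    intro ℓ hℓ hball heq
    have hmem : x' + ℓ • v' ∈ ball (0 : EuclideanSpace ℝ (Fin (n - 1))) ρ := by
      simpa [mem_ball, dist_eq_norm] using hball
    have hhz : |h (x' + ℓ • v')| ≤ (n : ℝ) * K * ‖x' + ℓ • v'‖ ^ 2 := hhb _ hmem
    have hhz' : |h (x' + ℓ • v')| < ρ / 32 := by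
      have hb : (n : ℝ) * K * ‖x' + ℓ • v'‖ ^ 2 ≤ (n : ℝ) * K * ρ ^ 2 := by
        have hz0 := norm_nonneg (x' + ℓ • v')
        have h2 : ‖x' + ℓ • v'‖ ^ 2 ≤ ρ ^ 2 := by nlinarith
        exact mul_le_mul_of_nonneg_left h2 hnK.le
      nlinarith
    have habs := abs_lt.mp hhz'
    have hℓvn : ℓ * vn < -(7 * ρ / 32) := by nlinarith
    refine ⟨?_, hℓvn⟩
    have h1 : ℓ * ‖v'‖ < 5 * ρ / 4 := by
      have he : ℓ * ‖v'‖ = ‖ℓ • v'‖ := by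
        rw [norm_smul, Real.norm_eq_abs, abs_of_pos hℓ]
      have h2 : ‖(x' + ℓ • v') - x'‖ ≤ ‖x' + ℓ • v'‖ + ‖x'‖ := norm_sub_le _ _
      have h3 : (x' + ℓ • v') - x' = ℓ • v' := by abel
      rw [h3] at h2
      rw [he]
      linarith
    have h3 : |ℓ * vn| < ρ := by
      have heq2 : ℓ * vn = h (x' + ℓ • v') - xn := by linarith
      rw [heq2, abs_sub_lt_iff]
      constructor <;> nlinarith
    have h4 : (ℓ * ‖v'‖) ^ 2 + (ℓ * vn) ^ 2 = ℓ ^ 2 := by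
      have : (ℓ * ‖v'‖) ^ 2 + (ℓ * vn) ^ 2 = ℓ ^ 2 * (‖v'‖ ^ 2 + vn ^ 2) := by ring
      rw [this, hv, mul_one]
    nlinarith [sq_abs (ℓ * vn), abs_nonneg (ℓ * vn),
      mul_nonneg hℓ.le (norm_nonneg v')]
  -- the main asymmetric claim
  have main : ∀ a b : ℝ, 0 < a → 0 < b →
      ‖x' + a • v'‖ < ρ → xn + a * vn = h (x' + a • v') →
      ‖x' + b • v'‖ < ρ → xn + b * vn = h (x' + b • v') → a < b → False := by
    intro a b ha hb hba heqa hbb heqb hab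
    set L : ℝ → EuclideanSpace ℝ (Fin (n - 1)) := fun t => x' + t • v' with hL
    have hmema : L a ∈ ball (0 : EuclideanSpace ℝ (Fin (n - 1))) ρ := by
      simpa [hL, mem_ball, dist_eq_norm] using hba
    have hmemb : L b ∈ ball (0 : EuclideanSpace ℝ (Fin (n - 1))) ρ := by
      simpa [hL, mem_ball, dist_eq_norm] using hbb
    have hba' : (0 : ℝ) < b - a := by linarith
    have hmem : ∀ t ∈ Icc a b, L t ∈ ball (0 : EuclideanSpace ℝ (Fin (n - 1))) ρ := by
      intro t ht
      obtain ⟨ht1, ht2⟩ := ht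
      set s : ℝ := (b - t) / (b - a) with hs
      set u : ℝ := (t - a) / (b - a) with hu
      have hs0 : 0 ≤ s := div_nonneg (by linarith) hba'.le
      have hu0 : 0 ≤ u := div_nonneg (by linarith) hba'.le
      have hsu : s + u = 1 := by
        rw [hs, hu, ← add_div]
        field_simp
        ring
      have hsab : s * a + u * b = t := by
        rw [hs, hu]
        field_simp
        ring
      have hcomb := (convex_ball (0 : EuclideanSpace ℝ (Fin (n - 1))) ρ) hmema hmemb hs0 hu0 hsu
      have heqL : L t = s • L a + u • L b := by
        simp only [hL]
        rw [smul_add, smul_add, smul_smul, smul_smul, add_add_add_comm,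
          ← add_smul, ← add_smul, hsu, hsab, one_smul]
      rw [heqL]
      exact hcomb
    set g : ℝ → ℝ := fun t => h (L t) - (xn + t * vn) with hg
    have hD : ∀ t ∈ Icc a b, HasDerivAt g ((fderiv ℝ h (L t)) v' - vn) t := by
      intro t ht
      have hmt := hmem t ht
      have hLd : HasDerivAt L v' t := by
        have h1 : HasDerivAt (fun s : ℝ => s • v') ((1 : ℝ) • v') t :=
          (hasDerivAt_id t).smul_const v'
        simpa [hL] using h1.const_add x'
      have hha : DifferentiableAt ℝ h (L t) :=
        hdiff.differentiableAt (isOpen_ball.mem_nhds hmt)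
      have hcomp : HasDerivAt (fun s => h (L s)) ((fderiv ℝ h (L t)) v') t :=
        hha.hasFDerivAt.comp_hasDerivAt t hLd
      have hlin : HasDerivAt (fun t : ℝ => xn + t * vn) vn t := by
        simpa using ((hasDerivAt_id t).mul_const vn).const_add xn
      exact hcomp.sub hlin
    have hcont : ContinuousOn g (Icc a b) := fun t ht =>
      (hD t ht).continuousAt.continuousWithinAt
    have hgab : g a = g b := by
      simp only [hg, hL]
      rw [← heqa, ← heqb]
      ring
    obtain ⟨c, hc, hc0⟩ := exists_hasDerivAt_eq_zero hab hcont hgab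
      (fun t ht => hD t (Ioo_subset_Icc_self ht))
    have hmc := hmem c (Ioo_subset_Icc_self hc)
    have hvn_eq : (fderiv ℝ h (L c)) v' = vn := by linarith [hc0, sub_eq_zero.mp hc0]
    have hfb : ‖fderiv ℝ h (L c)‖ ≤ (n : ℝ) * K * ρ := by
      rw [← fderivWithin_of_isOpen isOpen_ball hmc]
      exact hgrad _ hmc
    have hvnb : |vn| ≤ (n : ℝ) * K * ρ := by
      rw [← hvn_eq]
      calc |(fderiv ℝ h (L c)) v'| = ‖(fderiv ℝ h (L c)) v'‖ := (Real.norm_eq_abs _).symm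
        _ ≤ ‖fderiv ℝ h (L c)‖ * ‖v'‖ := (fderiv ℝ h (L c)).le_opNorm v'
        _ ≤ (n : ℝ) * K * ρ * 1 :=
            mul_le_mul hfb hv'1 (norm_nonneg v') (by positivity)
        _ = (n : ℝ) * K * ρ := mul_one _
    obtain ⟨hb2, hbvn⟩ := key b hb hbb heqb
    nlinarith [abs_nonneg vn, neg_abs_le vn, le_abs_self vn]
  intro ℓ₁ ℓ₂ h1 h2 h3 h4 h5 h6
  rcases lt_trichotomy ℓ₁ ℓ₂ with hlt | heq | hgt
  · exact absurd (main ℓ₁ ℓ₂ h1 h2 h3 h4 h5 h6 hlt) (fun f => f)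
  · exact heq
  · exact absurd (main ℓ₂ ℓ₁ h2 h1 h5 h6 h3 h4 hgt) (fun f => f)
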